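/- Let p ∈ [1,∞) and let I be a nonempty set. The submajorization relation ≺_s on ℓ^p(I)^+ is reflexive and transitive, i.e., it is a pre-order: f ≺_s f for every f ∈ ℓ^p(I)^+, and if f ≺_s g and g ≺_s h for f,g,h ∈ ℓ^p(I)^+ then f ≺_s h. -/

import Mathlib

open scoped ENNReal BigOperators

noncomputable section

/-- ℓᵖ(I) with real scalars. -/
abbrev Lp (I : Type*) (p : ℝ≥0∞) := lp (fun _ : I => ℝ) p

/-- The standard basis vector `e_j` of `ℓᵖ(I)`. -/
def stdVec {I : Type*} (p : ℝ≥0∞) (j : I) : Lp I p :=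
  haveI := Classical.decEq I
  lp.single p j 1

/-- A bounded operator on ℓᵖ(I) is positive if it maps the positive cone into itself. -/
def IsPos {I : Type*} {p : ℝ≥0∞} [Fact (1 ≤ p)] (A : Lp I p →L[ℝ] Lp I p) : Prop :=
  ∀ f : Lp I p, (∀ i, 0 ≤ f i) → ∀ i, 0 ≤ A f i

/-- Doubly stochastic operator on ℓᵖ(I). -/
def DoublyStochastic {I : Type*} {p : ℝ≥0∞} [Fact (1 ≤ p)]
    (A : Lp I p →L[ℝ] Lp I p) : Prop :=
  IsPos A ∧ (∀ i : I, HasSum (fun j : I => A (stdVec p j) i) 1)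
          ∧ (∀ j : I, HasSum (fun i : I => A (stdVec p j) i) 1)

/-- Doubly substochastic operator on ℓᵖ(I) (finite partial sums formulation). -/
def DoublySubstochastic {I : Type*} {p : ℝ≥0∞} [Fact (1 ≤ p)]
    (A : Lp I p →L[ℝ] Lp I p) : Prop :=
  IsPos A ∧ (∀ i : I, ∀ s : Finset I, ∑ j ∈ s, A (stdVec p j) i ≤ 1)
          ∧ (∀ j : I, ∀ s : Finset I, ∑ i ∈ s, A (stdVec p j) i ≤ 1)

/-- Increasable doubly substochastic operator on ℓᵖ(I). -/
def IncreasableDsS {I : Type*} {p : ℝ≥0∞} [Fact (1 ≤ p)]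
    (A : Lp I p →L[ℝ] Lp I p) : Prop :=
  IsPos A ∧ ∃ A₁ : Lp I p →L[ℝ] Lp I p, DoublyStochastic A₁ ∧
    ∀ i j : I, A (stdVec p j) i ≤ A₁ (stdVec p j) i

/-- Majorization: `f ≺ g`. -/
def Maj {I : Type*} {p : ℝ≥0∞} [Fact (1 ≤ p)] (f g : Lp I p) : Prop :=
  ∃ D : Lp I p →L[ℝ] Lp I p, DoublyStochastic D ∧ f = D g

/-- Weak majorization: `f ≺_w g`. -/
def MajW {I : Type*} {p : ℝ≥0∞} [Fact (1 ≤ p)] (f g : Lp I p) : Prop :=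
  ∃ D : Lp I p →L[ℝ] Lp I p, DoublySubstochastic D ∧ f = D g

/-- Submajorization: `f ≺_s g`. -/
def MajS {I : Type*} {p : ℝ≥0∞} [Fact (1 ≤ p)] (f g : Lp I p) : Prop :=
  ∃ D : Lp I p →L[ℝ] Lp I p, IncreasableDsS D ∧ f = D g

/-- Permutation operator on ℓᵖ(I). -/
def IsPermutationOp {I : Type*} {p : ℝ≥0∞} [Fact (1 ≤ p)]
    (P : Lp I p →L[ℝ] Lp I p) : Prop :=
  ∃ θ : I ≃ I, ∀ j : I, P (stdVec p j) = stdVec p (θ j)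

/-- `P` is the operator `P_θ` associated with the injection `θ : I → I`,
i.e. `P f = ∑_{k ∈ I} f(k) e_{θ(k)}`. -/
def IsPTheta {I : Type*} {p : ℝ≥0∞} [Fact (1 ≤ p)] (θ : I → I)
    (P : Lp I p →L[ℝ] Lp I p) : Prop :=
  (∀ f : Lp I p, ∀ k : I, P f (θ k) = f k) ∧
  (∀ f : Lp I p, ∀ i : I, i ∉ Set.range θ → P f i = 0)

/-- `T` preserves weak majorization on the positive cone. -/
def PreservesMajW {I : Type*} {p : ℝ≥0∞} [Fact (1 ≤ p)]
    (T : Lp I p →L[ℝ] Lp I p) : Prop :=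
  ∀ f g : Lp I p, (∀ i, 0 ≤ f i) → (∀ i, 0 ≤ g i) → MajW f g → MajW (T f) (T g)

/-- `T` preserves submajorization on the positive cone. -/
def PreservesMajS {I : Type*} {p : ℝ≥0∞} [Fact (1 ≤ p)]
    (T : Lp I p →L[ℝ] Lp I p) : Prop :=
  ∀ f g : Lp I p, (∀ i, 0 ≤ f i) → (∀ i, 0 ≤ g i) → MajS f g → MajS (T f) (T g)

end


noncomputable section
section Aux

variable {I : Type*} {p : ℝ≥0∞} [Fact (1 ≤ p)]

theorem stdVec_eq_single [DecidableEq I] (j : I) :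
    stdVec p j = lp.single p j (1 : ℝ) := by
  unfold stdVec
  congr!

open Classical in
theorem stdVec_apply (j i : I) : (stdVec p j : ∀ _ : I, ℝ) i = if i = j then 1 else 0 := by
  rw [stdVec_eq_single]
  rcases eq_or_ne i j with h | h
  · subst h; rw [if_pos rfl]; exact lp.single_apply_self (E := fun _ : I => ℝ) p i 1
  · rw [if_neg h]; exact lp.single_apply_ne (E := fun _ : I => ℝ) p j 1 h

open Classical in
theorem stdVec_nonneg (j i : I) : 0 ≤ (stdVec p j : ∀ _ : I, ℝ) i := by
  rw [stdVec_apply]; split <;> norm_num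

/-- Evaluation at a point as a continuous linear map. -/
def evalL (p : ℝ≥0∞) [Fact (1 ≤ p)] (i : I) : Lp I p →L[ℝ] ℝ :=
  LinearMap.mkContinuous
    { toFun := fun f => f i
      map_add' := fun f g => by simp
      map_smul' := fun c f => by simp }
    1 (fun f => by
      show ‖(f : ∀ _ : I, ℝ) i‖ ≤ 1 * ‖f‖
      simpa using lp.norm_apply_le_norm (zero_lt_one.trans_le (Fact.out : 1 ≤ p)).ne' f i)

@[simp] theorem evalL_apply (i : I) (f : Lp I p) : evalL p i f = f i := rfl

theorem hasSum_entry (hp : p ≠ ∞) (A : Lp I p →L[ℝ] Lp I p) (f : Lp I p) (i : I) :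
    HasSum (fun k => f k * A (stdVec p k) i) (A f i) := by
  haveI := Classical.decEq I
  have h := lp.hasSum_single (E := fun _ : I => ℝ) hp f
  have h2 : HasSum (fun k => ((evalL p i).comp A) (lp.single p k (f k)))
      (((evalL p i).comp A) f) := ((evalL p i).comp A).hasSum h
  have hsingle : ∀ k : I, (lp.single p k (f k) : Lp I p) = (f k) • stdVec p k := by
    intro k
    rw [stdVec_eq_single]
    ext j
    rcases eq_or_ne j k with h | h
    · subst h
      rw [lp.single_apply_self, lp.coeFn_smul, Pi.smul_apply, lp.single_apply_self,
        smul_eq_mul, mul_one]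
    · rw [lp.single_apply_ne (E := fun _ : I => ℝ) p k _ h, lp.coeFn_smul, Pi.smul_apply,
        lp.single_apply_ne (E := fun _ : I => ℝ) p k _ h, smul_zero]
  simpa [hsingle, ContinuousLinearMap.comp_apply, mul_comm] using h2

theorem key_fubini {u : I → I → ℝ} {t v : I → ℝ}
    (hu : ∀ k j, 0 ≤ u k j)
    (hrow : ∀ k, HasSum (u k) (t k)) (ht : HasSum t 1)
    (hcol : ∀ j, HasSum (fun k => u k j) (v j)) :
    HasSum v 1 := by
  classical
  have ht0 : ∀ k, 0 ≤ t k := by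
    intro k
    simpa using sum_le_hasSum (∅ : Finset I) (fun j _ => hu k j) (hrow k)
  have hF : Summable (fun x : I × I => u x.1 x.2) := by
    refine summable_of_sum_le (c := 1) (fun x => hu x.1 x.2) (fun s => ?_)
    calc ∑ x ∈ s, u x.1 x.2
        ≤ ∑ x ∈ (s.image Prod.fst) ×ˢ (s.image Prod.snd), u x.1 x.2 :=
          Finset.sum_le_sum_of_subset_of_nonneg
            (fun x hx => Finset.mem_product.2
              ⟨Finset.mem_image_of_mem _ hx, Finset.mem_image_of_mem _ hx⟩)
            (fun x _ _ => hu x.1 x.2)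
      _ = ∑ k ∈ s.image Prod.fst, ∑ j ∈ s.image Prod.snd, u k j := Finset.sum_product _ _ _
      _ ≤ ∑ k ∈ s.image Prod.fst, t k :=
          Finset.sum_le_sum fun k _ => sum_le_hasSum _ (fun j _ => hu k j) (hrow k)
      _ ≤ 1 := sum_le_hasSum _ (fun k _ => ht0 k) ht
  have hsum : HasSum (fun x : I × I => u x.1 x.2) 1 := by
    have h1 : (∑' x : I × I, u x.1 x.2) = 1 := by
      rw [Summable.tsum_prod' hF (fun k => (hrow k).summable)]
      calc (∑' k, ∑' j, u k j) = ∑' k, t k := tsum_congr fun k => (hrow k).tsum_eq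
        _ = 1 := ht.tsum_eq
    simpa [h1] using hF.hasSum
  have hswap : HasSum (fun x : I × I => u x.2 x.1) 1 := by
    refine ((Equiv.prodComm I I).hasSum_iff).mp ?_
    exact hsum
  exact hswap.prod_fiberwise fun j => hcol j

def IsPos' {I : Type*} {p : ℝ≥0∞} [Fact (1 ≤ p)] (A : Lp I p →L[ℝ] Lp I p) : Prop :=
  ∀ f : Lp I p, (∀ i, 0 ≤ f i) → ∀ i, 0 ≤ A f i

theorem entry_nonneg {A : Lp I p →L[ℝ] Lp I p} (hA : IsPos' A) (i j : I) :
    0 ≤ A (stdVec p j) i :=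
  hA _ (fun i' => stdVec_nonneg j i') i

theorem ds_id : IsPos' (ContinuousLinearMap.id ℝ (Lp I p)) ∧
    (∀ i : I, HasSum (fun j : I => (ContinuousLinearMap.id ℝ (Lp I p)) (stdVec p j) i) 1) ∧
    (∀ j : I, HasSum (fun i : I => (ContinuousLinearMap.id ℝ (Lp I p)) (stdVec p j) i) 1) := by
  classical
  refine ⟨fun f hf i => by simpa using hf i, ?_, ?_⟩
  · intro i
    simpa [ContinuousLinearMap.id_apply, stdVec_apply, eq_comm] using hasSum_ite_eq i (1:ℝ)
  · intro j
    simpa [ContinuousLinearMap.id_apply, stdVec_apply] using hasSum_ite_eq j (1:ℝ)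

/-- Composition of doubly stochastic (coordinatewise) data. -/
theorem ds_comp (hp : p ≠ ∞) {A B : Lp I p →L[ℝ] Lp I p}
    (hApos : IsPos' A) (hArow : ∀ i : I, HasSum (fun j : I => A (stdVec p j) i) 1)
    (hAcol : ∀ j : I, HasSum (fun i : I => A (stdVec p j) i) 1)
    (hBpos : IsPos' B) (hBrow : ∀ i : I, HasSum (fun j : I => B (stdVec p j) i) 1)
    (hBcol : ∀ j : I, HasSum (fun i : I => B (stdVec p j) i) 1) :
    IsPos' (A.comp B) ∧
    (∀ i : I, HasSum (fun j : I => (A.comp B) (stdVec p j) i) 1) ∧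
    (∀ j : I, HasSum (fun i : I => (A.comp B) (stdVec p j) i) 1) := by
  have ha : ∀ i k, 0 ≤ A (stdVec p k) i := fun i k => entry_nonneg hApos i k
  have hb : ∀ k j, 0 ≤ B (stdVec p j) k := fun k j => entry_nonneg hBpos k j
  have hexp : ∀ j i, HasSum (fun k => B (stdVec p j) k * A (stdVec p k) i)
      ((A.comp B) (stdVec p j) i) := fun j i => hasSum_entry hp A (B (stdVec p j)) i
  refine ⟨fun f hf i => hApos (B f) (hBpos f hf) i, ?_, ?_⟩
  · intro i
    exact key_fubini (u := fun k j => A (stdVec p k) i * B (stdVec p j) k)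
      (fun k j => mul_nonneg (ha i k) (hb k j))
      (fun k => by simpa using (hBrow k).mul_left (A (stdVec p k) i))
      (hArow i)
      (fun j => by simpa [mul_comm] using hexp j i)
  · intro j
    exact key_fubini (u := fun k i' => B (stdVec p j) k * A (stdVec p k) i')
      (fun k i' => mul_nonneg (hb k j) (ha i' k))
      (fun k => by simpa using (hAcol k).mul_left (B (stdVec p j) k))
      (hBcol j)
      (fun i' => hexp j i')

theorem comp_entry_le (hp : p ≠ ∞) {A A₁ B B₁ : Lp I p →L[ℝ] Lp I p}
    (hApos : IsPos' A) (hBpos : IsPos' B)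
    (hAle : ∀ i j, A (stdVec p j) i ≤ A₁ (stdVec p j) i)
    (hBle : ∀ i j, B (stdVec p j) i ≤ B₁ (stdVec p j) i) (i j : I) :
    (A.comp B) (stdVec p j) i ≤ (A₁.comp B₁) (stdVec p j) i := by
  have h1 : HasSum (fun k => B (stdVec p j) k * A (stdVec p k) i)
      ((A.comp B) (stdVec p j) i) := hasSum_entry hp A (B (stdVec p j)) i
  have h2 : HasSum (fun k => B₁ (stdVec p j) k * A₁ (stdVec p k) i)
      ((A₁.comp B₁) (stdVec p j) i) := hasSum_entry hp A₁ (B₁ (stdVec p j)) i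
  refine hasSum_le (fun k => ?_) h1 h2
  exact mul_le_mul (hBle k j) (hAle i k) (entry_nonneg hApos i k)
    (le_trans (entry_nonneg hBpos k j) (hBle k j))

end Aux
end

theorem stmt_7 {I : Type*} [Nonempty I] (p : ℝ≥0∞) [Fact (1 ≤ p)] (hp : p ≠ ∞) :
    (∀ f : Lp I p, (∀ i, 0 ≤ f i) → MajS f f) ∧
    (∀ f g h : Lp I p, (∀ i, 0 ≤ f i) → (∀ i, 0 ≤ g i) → (∀ i, 0 ≤ h i) →
      MajS f g → MajS g h → MajS f h) := by
  constructor
  · intro f hf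
    obtain ⟨hpos, hrow, hcol⟩ := ds_id (I := I) (p := p)
    exact ⟨ContinuousLinearMap.id ℝ (Lp I p),
      ⟨hpos, ContinuousLinearMap.id ℝ (Lp I p), ⟨hpos, hrow, hcol⟩, fun i j => le_rfl⟩,
      rfl⟩
  · intro f g h hf hg hh hfg hgh
    obtain ⟨D, ⟨hDpos, D₁, ⟨hD₁pos, hD₁row, hD₁col⟩, hDle⟩, rfl⟩ := hfg
    obtain ⟨E, ⟨hEpos, E₁, ⟨hE₁pos, hE₁row, hE₁col⟩, hEle⟩, rfl⟩ := hgh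
    obtain ⟨hCpos, hCrow, hCcol⟩ := ds_comp hp hD₁pos hD₁row hD₁col hE₁pos hE₁row hE₁col
    exact ⟨D.comp E,
      ⟨fun f hf i => hDpos (E f) (hEpos f hf) i, D₁.comp E₁, ⟨hCpos, hCrow, hCcol⟩,
        fun i j => comp_entry_le hp hDpos hEpos hDle hEle i j⟩,
      rfl⟩
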